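/- Let 𝕏 be a semi-abelian category and 𝒜 a full replete subcategory whose inclusion I : 𝒜 → 𝕏 has a left adjoint F such that every component of the unit η_X : X → IF(X) is a normal epimorphism. Let Ker(F) = {X ∈ 𝕏 : F(X) ≅ 0} and let ℰ = {X ∈ 𝕏 : F(ker(η_X)) ≅ 0}. Then the pair (Ker(F), 𝒜) is an ℰ-torsion theory in 𝕏. -/

import Mathlib

open CategoryTheory CategoryTheory.Limits

universe v u

variable {C : Type u} [Category.{v} C]

/-- A pair of composable morphisms is a short exact sequence if the composite is zero,
the first morphism is a kernel of the second and the second is a cokernel of the first. -/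
def IsShortExact [HasZeroMorphisms C] {A X B : C} (i : A ⟶ X) (p : X ⟶ B) : Prop :=
  ∃ w : i ≫ p = 0,
    Nonempty (IsLimit (KernelFork.ofι i w)) ∧ Nonempty (IsColimit (CokernelCofork.ofπ p w))

/-- A torsion theory: a pair of full replete subcategories (given as predicates on objects)
such that every morphism from a torsion object to a torsion-free object is zero, and every
object fits in a short exact sequence with torsion kernel part and torsion-free cokernel part. -/
structure IsTorsionTheory [HasZeroMorphisms C] (T F : C → Prop) : Prop where
  t_replete : ∀ {X Y : C}, (X ≅ Y) → T X → T Y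
  f_replete : ∀ {X Y : C}, (X ≅ Y) → F X → F Y
  hom_zero : ∀ {X Y : C} (f : X ⟶ Y), T X → F Y → f = 0
  exists_seq : ∀ X : C, ∃ (TX FX : C) (i : TX ⟶ X) (p : X ⟶ FX),
    T TX ∧ F FX ∧ IsShortExact i p

/-- A torsion theory relative to a class `E` of objects: TT1 holds for all objects, while the
short exact sequence is only required for objects of `E`. -/
structure IsRelTorsionTheory [HasZeroMorphisms C] (E T F : C → Prop) : Prop where
  hom_zero : ∀ {X Y : C} (f : X ⟶ Y), T X → F Y → f = 0
  exists_seq : ∀ X : C, E X → ∃ (TX FX : C) (i : TX ⟶ X) (p : X ⟶ FX),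
    T TX ∧ F FX ∧ IsShortExact i p

/-- A TTF (torsion torsion-free) theory: a triple of full subcategories whose two consecutive
pairs are torsion theories. -/
def IsTTF [HasZeroMorphisms C] (Cc T F : C → Prop) : Prop :=
  IsTorsionTheory Cc T ∧ IsTorsionTheory T F

/-- A semi-abelian category: pointed (zero object and zero morphisms), with binary coproducts,
Barr-exact (regular: finite limits, coequalizers of kernel pairs, pullback-stable regular
epimorphisms; and every internal equivalence relation is a kernel pair) and Bourn protomodular
(the split short five lemma holds). -/
structure IsSemiAbelian (C : Type u) [Category.{v} C] [HasZeroMorphisms C] : Prop where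
  hasZeroObject : HasZeroObject C
  hasBinaryCoproducts : HasBinaryCoproducts C
  hasFiniteLimits : HasFiniteLimits C
  hasCoequalizersOfKernelPairs :
    ∀ {X Y R : C} (f : X ⟶ Y) (p₁ p₂ : R ⟶ X) (w : p₁ ≫ f = p₂ ≫ f),
      Nonempty (IsLimit (PullbackCone.mk p₁ p₂ w)) → HasCoequalizer p₁ p₂
  regularEpiStable :
    ∀ {X Y Z P : C} (f : X ⟶ Y) (g : Z ⟶ Y) (p₁ : P ⟶ X) (p₂ : P ⟶ Z) (w : p₁ ≫ f = p₂ ≫ g),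
      Nonempty (IsLimit (PullbackCone.mk p₁ p₂ w)) → Nonempty (RegularEpi f) →
        Nonempty (RegularEpi p₂)
  equivalenceRelationsEffective :
    ∀ {R X : C} (p₁ p₂ : R ⟶ X),
      (∀ {W : C} (a b : W ⟶ R), a ≫ p₁ = b ≫ p₁ → a ≫ p₂ = b ≫ p₂ → a = b) →
      (∃ r : X ⟶ R, r ≫ p₁ = 𝟙 X ∧ r ≫ p₂ = 𝟙 X) →
      (∃ s : R ⟶ R, s ≫ p₁ = p₂ ∧ s ≫ p₂ = p₁) →
      (∀ {P : C} (q₁ q₂ : P ⟶ R) (w : q₁ ≫ p₂ = q₂ ≫ p₁),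
        Nonempty (IsLimit (PullbackCone.mk q₁ q₂ w)) →
          ∃ t : P ⟶ R, t ≫ p₁ = q₁ ≫ p₁ ∧ t ≫ p₂ = q₂ ≫ p₂) →
      ∃ (Y : C) (q : X ⟶ Y) (w : p₁ ≫ q = p₂ ≫ q),
        Nonempty (IsLimit (PullbackCone.mk p₁ p₂ w))
  splitShortFiveLemma :
    ∀ {K X Y K' X' Y' : C} (k : K ⟶ X) (f : X ⟶ Y) (s : Y ⟶ X)
      (k' : K' ⟶ X') (f' : X' ⟶ Y') (s' : Y' ⟶ X')
      (α : K ⟶ K') (β : X ⟶ X') (γ : Y ⟶ Y'),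
      s ≫ f = 𝟙 Y → s' ≫ f' = 𝟙 Y' →
      IsShortExact k f → IsShortExact k' f' →
      k ≫ β = α ≫ k' → f ≫ γ = β ≫ f' →
      IsIso α → IsIso γ → IsIso β

/-- Zero morphisms on a full subcategory, induced by those of the ambient category. -/
instance (Z : C → Prop) [HasZeroMorphisms C] : HasZeroMorphisms (ObjectProperty.FullSubcategory Z) where
  zero X Y := ⟨ObjectProperty.homMk (P := Z) (0 : X.obj ⟶ Y.obj)⟩
  comp_zero {_X _Y} f Z' := by ext; exact Limits.comp_zero (C := C) (f := f.hom) (Z := Z'.obj)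
  zero_comp X {_Y _Z'} f := by ext; exact Limits.zero_comp (C := C) (X := X.obj) (f := f.hom)

/-- Let `𝕏` be semi-abelian and `𝒜` a full replete subcategory whose
inclusion has a left adjoint `F` (encoded pointwise by its reflections) such that every
unit component `η_X : X → F(X)` is a normal epimorphism.  With
`Ker(F) = {X ∣ F(X) ≅ 0}` and `ℰ = {X ∣ F(ker η_X) ≅ 0}`, the pair `(Ker(F), 𝒜)` is an
`ℰ`-torsion theory in `𝕏`. -/
theorem normal_epireflective_relTorsionTheory [HasZeroMorphisms C]
    (hC : IsSemiAbelian C) (A : C → Prop)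
    (hA_replete : ∀ {X Y : C}, (X ≅ Y) → A X → A Y)
    (F : C → C) (η : ∀ X : C, X ⟶ F X)
    (hF : ∀ X : C, A (F X))
    (hη : ∀ X : C, Nonempty (NormalEpi (η X)))
    (huniv : ∀ (X Y : C), A Y → ∀ f : X ⟶ Y, ∃! g : F X ⟶ Y, η X ≫ g = f) :
    IsRelTorsionTheory
      (fun X => ∃ (K : C) (k : K ⟶ X) (w : k ≫ η X = 0),
        Nonempty (IsLimit (KernelFork.ofι k w)) ∧ IsZero (F K))
      (fun X => IsZero (F X)) A := by
  constructor
  · intro X Y f hTX hAY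
    obtain ⟨g, hg, -⟩ := huniv X Y hAY f
    rw [← hg, hTX.eq_of_src g 0, comp_zero]
  · intro X hEX
    obtain ⟨K, k, w, ⟨hk⟩, hFK⟩ := hEX
    refine ⟨K, F X, k, η X, hFK, hF X, w, ⟨hk⟩, ?_⟩
    obtain ⟨ne⟩ := hη X
    obtain ⟨l, hl⟩ := KernelFork.IsLimit.lift' hk ne.g ne.w
    have hz : ∀ {Z : C} (h : X ⟶ Z), k ≫ h = 0 → ne.g ≫ h = 0 := by
      intro Z h hh
      rw [← hl]
      simp only [KernelFork.ι_ofι, Category.assoc, hh, comp_zero]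
    refine ⟨CokernelCofork.IsColimit.ofπ _ _
      (fun {Z} h hh => ne.isColimit.desc (CokernelCofork.ofπ h (hz h hh)))
      (fun {Z} h hh => ne.isColimit.fac _ WalkingParallelPair.one)
      (fun {Z} h hh m hm => ?_)⟩
    refine Cofork.IsColimit.hom_ext ne.isColimit ?_
    have fac := ne.isColimit.fac (CokernelCofork.ofπ h (hz h hh)) WalkingParallelPair.one
    exact hm.trans fac.symm
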